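/- For any integer b ≥ 2: ∑_{k=0}^{b−1} (bk + 1 + b·((b−1)(bk+1)/(b−k) + 1)) < 3b⁴ ln b, where the inner division is over the rationals/reals. -/

import Mathlib

open Real

lemma harm_le (n : ℕ) (hn : 1 ≤ n) :
    ∑ j ∈ Finset.range n, (1:ℝ)/(j+1) ≤ 1 + Real.log n := by
  induction n with
  | zero => omega
  | succ m ih =>
    rcases Nat.lt_or_ge m 1 with h | hm
    · interval_cases m
      simp
    · have hm0 : (0:ℝ) < m := by positivity
      have key : (1:ℝ)/(m+1) ≤ Real.log (m+1) - Real.log m := by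
        have h1 : Real.log ((m:ℝ)/(m+1)) ≤ (m:ℝ)/(m+1) - 1 :=
          Real.log_le_sub_one_of_pos (by positivity)
        rw [Real.log_div (by positivity) (by positivity)] at h1
        have h2 : (m:ℝ)/(m+1) - 1 = -(1/(m+1)) := by field_simp; ring
        linarith [h1, h2.le]
      have ihm := ih hm
      rw [Finset.sum_range_succ]
      push_cast
      push_cast at ihm key
      linarith

open Real in
theorem total_writes_bound (b : ℕ) (hb : 2 ≤ b) :
    ∑ k ∈ Finset.range b,
      ((b : ℝ) * k + 1 + b * ((b - 1) * (b * k + 1) / (b - k) + 1))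
      < 3 * (b : ℝ) ^ 4 * Real.log b := by
  rcases Nat.eq_or_lt_of_le hb with h2 | h3
  · -- b = 2
    subst h2
    have hlog : (0.6931471803 : ℝ) < Real.log 2 := Real.log_two_gt_d9
    rw [Finset.sum_range_succ, Finset.sum_range_succ, Finset.sum_range_zero]
    push_cast
    norm_num
    linarith
  · -- b ≥ 3
    have hb3 : (3:ℝ) ≤ b := by exact_mod_cast h3
    have hb0 : (0:ℝ) < b := by linarith
    -- termwise bound
    have h_term : ∀ k ∈ Finset.range b,
        (b : ℝ) * k + 1 + b * ((b - 1) * (b * k + 1) / (b - k) + 1)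
          ≤ (b:ℝ)^2 + b + b^4 * (1/((b:ℝ)-k)) := by
      intro k hk
      have hk' : k < b := Finset.mem_range.mp hk
      have hkb : (k:ℝ) ≤ (b:ℝ) - 1 := by
        have : (k:ℝ) + 1 ≤ b := by exact_mod_cast hk'
        linarith
      have hx : (0:ℝ) < (b:ℝ) - k := by linarith
      have hbk : (b:ℝ)*k + 1 ≤ (b:ℝ)^2 := by nlinarith
      have hnum : ((b:ℝ)-1)*((b:ℝ)*k+1) ≤ (b:ℝ)^3 := by nlinarith
      have hdiv : ((b:ℝ)-1)*((b:ℝ)*k+1) / ((b:ℝ)-k) ≤ (b:ℝ)^3 / ((b:ℝ)-k) := by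
        gcongr
      have hmul : (b:ℝ) * (((b:ℝ)-1)*((b:ℝ)*k+1) / ((b:ℝ)-k) + 1)
          ≤ (b:ℝ) * ((b:ℝ)^3 / ((b:ℝ)-k) + 1) := by
        apply mul_le_mul_of_nonneg_left _ (le_of_lt hb0)
        linarith
      have heq : (b:ℝ) * ((b:ℝ)^3 / ((b:ℝ)-k) + 1)
          = (b:ℝ)^4 * (1/((b:ℝ)-k)) + b := by
        field_simp
      linarith
    have hsum1 : ∑ k ∈ Finset.range b,
        ((b : ℝ) * k + 1 + b * ((b - 1) * (b * k + 1) / (b - k) + 1))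
        ≤ ∑ k ∈ Finset.range b, ((b:ℝ)^2 + b + b^4 * (1/((b:ℝ)-k))) :=
      Finset.sum_le_sum h_term
    have hsum2 : ∑ k ∈ Finset.range b, ((b:ℝ)^2 + b + b^4 * (1/((b:ℝ)-k)))
        = (b:ℝ)*((b:ℝ)^2+b) + (b:ℝ)^4 * ∑ k ∈ Finset.range b, (1/((b:ℝ)-k)) := by
      rw [Finset.sum_add_distrib, Finset.sum_const, ← Finset.mul_sum, Finset.card_range]
      push_cast
      ring
    have hrefl : ∑ k ∈ Finset.range b, (1/((b:ℝ)-k))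
        = ∑ j ∈ Finset.range b, (1:ℝ)/(j+1) := by
      rw [← Finset.sum_range_reflect (fun j => (1:ℝ)/(j+1)) b]
      apply Finset.sum_congr rfl
      intro k hk
      have hk' : k < b := Finset.mem_range.mp hk
      congr 1
      have h1 : (b - 1 - k : ℕ) = b - (k+1) := by omega
      rw [h1, Nat.cast_sub (by omega : k+1 ≤ b)]
      push_cast
      ring
    have hharm : ∑ j ∈ Finset.range b, (1:ℝ)/(j+1) ≤ 1 + Real.log b :=
      harm_le b (by omega)
    have hlog1 : (1:ℝ) ≤ Real.log b := by
      rw [Real.le_log_iff_exp_le hb0]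
      have := Real.exp_one_lt_d9
      linarith
    have hL' : (b:ℝ)^4 ≤ (b:ℝ)^4 * Real.log b :=
      le_mul_of_one_le_right (by positivity) hlog1
    have hsq : (0:ℝ) < (b:ℝ)^2 := by positivity
    have h1 : 3*(b:ℝ)^2 ≤ (b:ℝ)^3 := by nlinarith [mul_le_mul_of_nonneg_left hb3 hsq.le]
    have h2 : 3*(b:ℝ)^3 ≤ (b:ℝ)^4 := by nlinarith [mul_le_mul_of_nonneg_left hb3 (mul_pos hb0 hsq).le]
    have hcube : (b:ℝ)^3 + (b:ℝ)^2 < (b:ℝ)^4 := by linarith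
    have hfin : (b:ℝ)*((b:ℝ)^2+b) + (b:ℝ)^4 * (1 + Real.log b)
        < 3 * (b:ℝ)^4 * Real.log b := by
      ring_nf
      ring_nf at hL' hcube
      linarith
    calc ∑ k ∈ Finset.range b,
        ((b : ℝ) * k + 1 + b * ((b - 1) * (b * k + 1) / (b - k) + 1))
        ≤ (b:ℝ)*((b:ℝ)^2+b) + (b:ℝ)^4 * ∑ k ∈ Finset.range b, (1/((b:ℝ)-k)) := by
          rw [← hsum2]; exact hsum1
      _ ≤ (b:ℝ)*((b:ℝ)^2+b) + (b:ℝ)^4 * (1 + Real.log b) := by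
          have : ∑ k ∈ Finset.range b, (1/((b:ℝ)-k)) ≤ 1 + Real.log b := by
            rw [hrefl]; exact hharm
          have h4 : (0:ℝ) ≤ (b:ℝ)^4 := by positivity
          nlinarith [mul_le_mul_of_nonneg_left this h4]
      _ < 3 * (b:ℝ)^4 * Real.log b := hfin
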